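/- Let n be even, a, k ∈ ℝ^n, suppose a_1 = a_2 = ⋯ = a_ℓ = 0 and a_{ℓ+1} ≠ 0, and let λ = ⌊ℓ/2⌋. Then for every m = 1,...,λ and every x in the positive orthant (0,∞)^n, {J_m, H}(x) = J_m(x) (k_1 + k_2 + ⋯ + k_{2m}), where the bracket is the log-canonical Poisson bracket. -/

import Mathlib

/-- Partial derivative `∂f/∂x_i` of a function on `ℝⁿ`. -/
noncomputable def pd {n : ℕ} (f : (Fin n → ℝ) → ℝ) (x : Fin n → ℝ) (i : Fin n) : ℝ :=
  fderiv ℝ f x (Pi.single i 1)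

/-- The log-canonical Poisson bracket
`{f,g}(x) = Σ_{i<j} x_i x_j (∂f/∂x_i ∂g/∂x_j − ∂f/∂x_j ∂g/∂x_i)`. -/
noncomputable def pb {n : ℕ} (f g : (Fin n → ℝ) → ℝ) (x : Fin n → ℝ) : ℝ :=
  ∑ i : Fin n, ∑ j : Fin n,
    if i < j then x i * x j * (pd f x i * pd g x j - pd f x j * pd g x i) else 0

/-- `J_m(x) = (x_1 x_3 ⋯ x_{2m−1})/(x_2 x_4 ⋯ x_{2m})` (1-based; here indices are 0-based,
so the numerator ranges over even indices `< 2m` and the denominator over odd indices `< 2m`). -/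
noncomputable def Jfun {n : ℕ} (m : ℕ) (x : Fin n → ℝ) : ℝ :=
  (∏ i ∈ Finset.univ.filter (fun i : Fin n => i.val < 2*m ∧ Even i.val), x i) /
  (∏ i ∈ Finset.univ.filter (fun i : Fin n => i.val < 2*m ∧ Odd i.val), x i)

/-- `I_m(x) = (x_{2m+2} x_{2m+4} ⋯ x_n)/(x_{2m+1} x_{2m+3} ⋯ x_{n−1})` (1-based; here 0-based:
numerator over odd indices `≥ 2m`, denominator over even indices `≥ 2m`). -/
noncomputable def Ifun {n : ℕ} (m : ℕ) (x : Fin n → ℝ) : ℝ :=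
  (∏ i ∈ Finset.univ.filter (fun i : Fin n => 2*m ≤ i.val ∧ Odd i.val), x i) /
  (∏ i ∈ Finset.univ.filter (fun i : Fin n => 2*m ≤ i.val ∧ Even i.val), x i)

/-- `v_m(x) = a_1 x_1 + ⋯ + a_m x_m` (sum of the first `m` coordinates, 0-based indices `< m`). -/
def vfun {n : ℕ} (a : Fin n → ℝ) (m : ℕ) (x : Fin n → ℝ) : ℝ :=
  ∑ j ∈ Finset.univ.filter (fun j : Fin n => j.val < m), a j * x j

/-- `F_m = v_{2m} I_m`. -/
noncomputable def Ffun {n : ℕ} (a : Fin n → ℝ) (m : ℕ) (x : Fin n → ℝ) : ℝ :=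
  vfun a (2*m) x * Ifun m x

/-- The Hamiltonian `H(x) = Σ_i (a_i x_i + k_i log x_i)`. -/
noncomputable def Hfun {n : ℕ} (a k : Fin n → ℝ) (x : Fin n → ℝ) : ℝ :=
  ∑ i, (a i * x i + k i * Real.log (x i))

noncomputable def epsc (m t : ℕ) : ℝ := if t < 2*m then (-1)^t else 0

lemma hasFDeriv_coordProd {n : ℕ} (s : Finset (Fin n)) (x : Fin n → ℝ) :
    HasFDerivAt (𝕜 := ℝ) (fun y : Fin n → ℝ => ∏ j ∈ s, y j)
      (∑ j ∈ s, (∏ l ∈ s.erase j, x l) • ContinuousLinearMap.proj j) x :=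
  (hasFDerivAt_finset_prod (𝕜 := ℝ) (u := s) (x := x)).congr_of_eventuallyEq
    (Filter.Eventually.of_forall fun y => by simp [Finset.prod_apply])

lemma coordProd_apply_single {n : ℕ} (s : Finset (Fin n)) (x : Fin n → ℝ) (i : Fin n) :
    (∑ j ∈ s, (∏ l ∈ s.erase j, x l) •
        ContinuousLinearMap.proj (R := ℝ) (φ := fun _ : Fin n => ℝ) j) (Pi.single i 1)
      = if i ∈ s then ∏ l ∈ s.erase i, x l else 0 := by
  simp [ContinuousLinearMap.sum_apply, Pi.single_apply, Finset.sum_ite_eq']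

lemma pd_H {n : ℕ} (a k : Fin n → ℝ) (x : Fin n → ℝ) (hx : ∀ i, 0 < x i) (i : Fin n) :
    pd (Hfun a k) x i = a i + k i / x i := by
  have hterm : ∀ j : Fin n, HasFDerivAt (𝕜 := ℝ)
      (fun y : Fin n → ℝ => a j * y j + k j * Real.log (y j))
      ((a j + k j * (x j)⁻¹) • ContinuousLinearMap.proj j) x := by
    intro j
    have hproj : HasFDerivAt (𝕜 := ℝ) (fun y : Fin n → ℝ => y j)
        (ContinuousLinearMap.proj j) x :=
      (ContinuousLinearMap.proj (R := ℝ) (φ := fun _ : Fin n => ℝ) j).hasFDerivAt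
    have h1 := hproj.const_mul (a j)
    have hlog : HasDerivAt Real.log (x j)⁻¹ (x j) := Real.hasDerivAt_log (hx j).ne'
    have h2 : HasFDerivAt (𝕜 := ℝ) (fun y : Fin n → ℝ => Real.log (y j))
        ((x j)⁻¹ • ContinuousLinearMap.proj j) x := by
      have := hlog.comp_hasFDerivAt x hproj; exact this
    have h3 := h1.add (h2.const_mul (k j))
    convert h3 using 1
    ext v
    simp [ContinuousLinearMap.smul_apply]
    case e'_12 => rw [add_smul, smul_smul]
    all_goals rfl
  have hH : HasFDerivAt (𝕜 := ℝ) (Hfun a k)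
      (∑ j : Fin n, (a j + k j * (x j)⁻¹) • ContinuousLinearMap.proj j) x := by
    have := HasFDerivAt.fun_sum (fun j (_ : j ∈ Finset.univ) => hterm j)
    exact this.congr_of_eventuallyEq (Filter.Eventually.of_forall fun y => rfl)
  rw [pd, hH.fderiv]
  have hxi := (hx i).ne'
  simp [ContinuousLinearMap.sum_apply, Pi.single_apply, Finset.sum_ite_eq', mul_ite,
    div_eq_mul_inv]

lemma pd_J {n : ℕ} (m : ℕ) (x : Fin n → ℝ) (hx : ∀ i, 0 < x i) (i : Fin n) :
    pd (Jfun m) x i = epsc m i.val * Jfun m x / x i := by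
  classical
  set A : Finset (Fin n) := Finset.univ.filter (fun i : Fin n => i.val < 2*m ∧ Even i.val) with hA
  set B : Finset (Fin n) := Finset.univ.filter (fun i : Fin n => i.val < 2*m ∧ Odd i.val) with hB
  set P : ℝ := ∏ l ∈ A, x l with hP
  set Q : ℝ := ∏ l ∈ B, x l with hQ
  have hQpos : 0 < Q := Finset.prod_pos fun l _ => hx l
  have hPpos : 0 < P := Finset.prod_pos fun l _ => hx l
  have hPd := hasFDeriv_coordProd A x
  have hQd := hasFDeriv_coordProd B x
  have hQinv : HasFDerivAt (𝕜 := ℝ) (fun y : Fin n → ℝ => (∏ l ∈ B, y l)⁻¹)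
      ((-(Q^2)⁻¹) • (∑ j ∈ B, (∏ l ∈ B.erase j, x l) • ContinuousLinearMap.proj j)) x := by
    have hinv : HasDerivAt (fun t : ℝ => t⁻¹) (-(Q^2)⁻¹) Q := hasDerivAt_inv hQpos.ne'
    exact hinv.comp_hasFDerivAt x hQd
  have hJ : HasFDerivAt (𝕜 := ℝ) (Jfun m)
      (P • ((-(Q^2)⁻¹) • (∑ j ∈ B, (∏ l ∈ B.erase j, x l) • ContinuousLinearMap.proj j))
        + Q⁻¹ • (∑ j ∈ A, (∏ l ∈ A.erase j, x l) • ContinuousLinearMap.proj j)) x := by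
    have := hPd.mul hQinv
    exact this.congr_of_eventuallyEq (Filter.Eventually.of_forall fun y => by
      simp [Jfun, hA, hB, div_eq_mul_inv])
  rw [pd, hJ.fderiv]
  have hxi := (hx i).ne'
  simp only [ContinuousLinearMap.add_apply, ContinuousLinearMap.smul_apply,
    coordProd_apply_single, smul_eq_mul]
  have hAB : ∀ j : Fin n, ¬ (j ∈ A ∧ j ∈ B) := by
    intro j ⟨hja, hjb⟩
    rw [hA, Finset.mem_filter] at hja
    rw [hB, Finset.mem_filter] at hjb
    exact (Nat.not_odd_iff_even.mpr hja.2.2) hjb.2.2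
  by_cases hiA : i ∈ A
  · have hiB : i ∉ B := fun h => hAB i ⟨hiA, h⟩
    have hPe : (∏ l ∈ A.erase i, x l) * x i = P := Finset.prod_erase_mul A x hiA
    rw [if_pos hiA, if_neg hiB]
    have hieps : epsc m i.val = 1 := by
      rw [hA, Finset.mem_filter] at hiA
      simp [epsc, hiA.2.1, Even.neg_one_pow hiA.2.2]
    rw [hieps, Jfun]
    rw [← hA, ← hB, ← hP, ← hQ]
    field_simp
    nlinarith [hPe, hQpos]
  · by_cases hiB : i ∈ B
    · have hQe : (∏ l ∈ B.erase i, x l) * x i = Q := Finset.prod_erase_mul B x hiB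
      rw [if_neg hiA, if_pos hiB]
      have hieps : epsc m i.val = -1 := by
        rw [hB, Finset.mem_filter] at hiB
        simp [epsc, hiB.2.1, Odd.neg_one_pow hiB.2.2]
      rw [hieps, Jfun, ← hA, ← hB, ← hP, ← hQ]
      have hBe : (∏ l ∈ B.erase i, x l) = Q / x i := by
        field_simp [← hQe]
        exact hQe
      rw [hBe]
      field_simp
      ring
    · rw [if_neg hiA, if_neg hiB]
      have hieps : epsc m i.val = 0 := by
        simp only [hA, Finset.mem_filter, Finset.mem_univ, true_and, not_and] at hiA
        simp only [hB, Finset.mem_filter, Finset.mem_univ, true_and, not_and] at hiB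
        have hlt : ¬ (i.val < 2*m) := by
          intro hlt
          rcases Nat.even_or_odd i.val with he | ho
          · exact (hiA hlt) he
          · exact (hiB hlt) ho
        simp [epsc, hlt]
      simp [hieps]


lemma altsum (r : ℕ) : ∑ i ∈ Finset.range r, ((-1:ℝ))^i = if Even r then 0 else 1 := by
  induction r with
  | zero => simp
  | succ r ih =>
    rw [Finset.sum_range_succ, ih]
    by_cases he : Even r
    · simp [he, Nat.even_add_one, he.neg_one_pow]
    · simp [he, Nat.even_add_one, (Nat.not_even_iff_odd.mp he).neg_one_pow]

lemma double_split (r : ℕ) (F : ℕ → ℕ → ℝ) :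
    ∑ i ∈ Finset.range (r+1), ∑ j ∈ Finset.range (r+1), F i j
      = (∑ i ∈ Finset.range r, ∑ j ∈ Finset.range r, F i j)
        + (∑ i ∈ Finset.range r, F i r) + (∑ j ∈ Finset.range r, F r j) + F r r := by
  rw [Finset.sum_range_succ]
  simp_rw [Finset.sum_range_succ]
  rw [Finset.sum_add_distrib]
  ring

lemma alt2 (r : ℕ) (b : ℕ → ℝ) :
    ∑ i ∈ Finset.range r, ∑ j ∈ Finset.range r,
        (if i < j then (-1:ℝ)^i * b j - (-1)^j * b i else 0)
      = (if Even r then 1 else 0) * ∑ j ∈ Finset.range r, b j := by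
  induction r with
  | zero => simp
  | succ r ih =>
    rw [double_split, ih]
    have h1 : (∑ i ∈ Finset.range r,
        (if i < r then (-1:ℝ)^i * b r - (-1)^r * b i else 0))
        = (∑ i ∈ Finset.range r, ((-1:ℝ))^i) * b r - (-1)^r * ∑ i ∈ Finset.range r, b i := by
      rw [Finset.sum_congr rfl (fun i hi =>
        if_pos (Finset.mem_range.mp hi) :
        ∀ i ∈ Finset.range r, (if i < r then (-1:ℝ)^i * b r - (-1)^r * b i else 0)
          = (-1:ℝ)^i * b r - (-1)^r * b i),
        Finset.sum_sub_distrib, ← Finset.sum_mul, ← Finset.mul_sum]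
    have h2 : (∑ j ∈ Finset.range r,
        (if r < j then (-1:ℝ)^r * b j - (-1)^j * b r else 0)) = 0 := by
      apply Finset.sum_eq_zero
      intro j hj
      exact if_neg (by have := Finset.mem_range.mp hj; omega)
    rw [h1, h2, if_neg (lt_irrefl r), altsum, Finset.sum_range_succ]
    by_cases he : Even r
    · simp only [he, if_true, Nat.even_add_one, not_true, if_false, he.neg_one_pow]
      ring
    · simp only [he, if_false, Nat.even_add_one, not_false_iff, if_true,
        (Nat.not_even_iff_odd.mp he).neg_one_pow]
      ring

lemma keysum (m : ℕ) (b : ℕ → ℝ) :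
    ∀ n, 2*m ≤ n →
    ∑ i ∈ Finset.range n, ∑ j ∈ Finset.range n,
        (if i < j then epsc m i * b j - epsc m j * b i else 0)
      = ∑ j ∈ Finset.range (2*m), b j := by
  intro n hn
  induction n, hn using Nat.le_induction with
  | base =>
    have hcong : ∀ i ∈ Finset.range (2*m), ∀ j ∈ Finset.range (2*m),
        (if i < j then epsc m i * b j - epsc m j * b i else 0)
          = (if i < j then (-1:ℝ)^i * b j - (-1)^j * b i else 0) := by
      intro i hi j hj
      rw [epsc, epsc, if_pos (Finset.mem_range.mp hi), if_pos (Finset.mem_range.mp hj)]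
    rw [Finset.sum_congr rfl (fun i hi => Finset.sum_congr rfl (hcong i hi)), alt2,
      if_pos (even_two_mul m), one_mul]
  | succ n hn ih =>
    rw [double_split, ih]
    have hn0 : epsc m n = 0 := by rw [epsc, if_neg (by omega)]
    have h1 : (∑ i ∈ Finset.range n, (if i < n then epsc m i * b n - epsc m n * b i else 0))
        = (∑ i ∈ Finset.range n, epsc m i) * b n := by
      rw [Finset.sum_congr rfl (fun i hi => by
          rw [if_pos (Finset.mem_range.mp hi), hn0]; ring :
          ∀ i ∈ Finset.range n, (if i < n then epsc m i * b n - epsc m n * b i else 0)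
            = epsc m i * b n), ← Finset.sum_mul]
    have h3 : (∑ i ∈ Finset.range n, epsc m i) = 0 := by
      rw [← Finset.sum_subset (Finset.range_subset_range.mpr hn)
        (fun i _ hi => by rw [epsc, if_neg (fun h => hi (Finset.mem_range.mpr h))])]
      have he : ∀ i ∈ Finset.range (2*m), epsc m i = (-1:ℝ)^i :=
        fun i hi => if_pos (Finset.mem_range.mp hi)
      rw [Finset.sum_congr rfl he, altsum, if_pos (even_two_mul m)]
    have h2 : (∑ j ∈ Finset.range n, (if n < j then epsc m n * b j - epsc m j * b n else 0)) = 0 :=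
      Finset.sum_eq_zero fun j hj => if_neg (by have := Finset.mem_range.mp hj; omega)
    rw [h1, h2, h3, if_neg (lt_irrefl n)]
    ring


/-- Lemma 4.2 of the paper: for even `n = 2N`, if `a_1 = ⋯ = a_ℓ = 0`, `a_{ℓ+1} ≠ 0` and
`λ = ⌊ℓ/2⌋`, then for `1 ≤ m ≤ λ`, `{J_m, H} = J_m (k_1 + ⋯ + k_{2m})`. -/
theorem stmt_9 (N : ℕ) (a k : Fin (2*N) → ℝ)
    (ℓ : ℕ) (hℓ : ℓ < 2*N) (hℓ1 : a ⟨ℓ, hℓ⟩ ≠ 0)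
    (hℓ0 : ∀ j : Fin (2*N), j.val < ℓ → a j = 0)
    (m : ℕ) (hm1 : 1 ≤ m) (hm2 : m ≤ ℓ/2)
    (x : Fin (2*N) → ℝ) (hx : ∀ i, 0 < x i) :
    pb (Jfun m) (Hfun a k) x
      = Jfun m x * ∑ i ∈ Finset.univ.filter (fun i : Fin (2*N) => i.val < 2*m), k i := by
  have h2mℓ : 2*m ≤ ℓ := by omega
  have h2mN : 2*m ≤ 2*N := by omega
  set bb : ℕ → ℝ := fun t => if h : t < 2*N then a ⟨t,h⟩ * x ⟨t,h⟩ + k ⟨t,h⟩ else 0 with hbb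
  have hbbv : ∀ i : Fin (2*N), bb i.val = a i * x i + k i := by
    intro i
    simp [hbb, i.isLt]
  -- termwise rewriting of the bracket
  have hterm : ∀ i j : Fin (2*N),
      (if i < j then x i * x j *
        (pd (Jfun m) x i * pd (Hfun a k) x j - pd (Jfun m) x j * pd (Hfun a k) x i) else 0)
      = Jfun m x * (if i.val < j.val then epsc m i.val * bb j.val - epsc m j.val * bb i.val else 0) := by
    intro i j
    by_cases hij : i.val < j.val
    · rw [if_pos (Fin.lt_def.mpr hij), if_pos hij, pd_J m x hx, pd_J m x hx,
        pd_H a k x hx, pd_H a k x hx, hbbv, hbbv]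
      have hxi := (hx i).ne'
      have hxj := (hx j).ne'
      field_simp
    · rw [if_neg (fun h => hij (Fin.lt_def.mp h)), if_neg hij, mul_zero]
  rw [pb]
  calc (∑ i : Fin (2*N), ∑ j : Fin (2*N),
        if i < j then x i * x j *
          (pd (Jfun m) x i * pd (Hfun a k) x j - pd (Jfun m) x j * pd (Hfun a k) x i) else 0)
      = Jfun m x * ∑ i : Fin (2*N), ∑ j : Fin (2*N),
          (if i.val < j.val then epsc m i.val * bb j.val - epsc m j.val * bb i.val else 0) := by
        rw [Finset.mul_sum]
        refine Finset.sum_congr rfl fun i _ => ?_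
        rw [Finset.mul_sum]
        exact Finset.sum_congr rfl fun j _ => hterm i j
    _ = Jfun m x * ∑ s ∈ Finset.range (2*N), ∑ t ∈ Finset.range (2*N),
          (if s < t then epsc m s * bb t - epsc m t * bb s else 0) := by
        congr 1
        rw [← Fin.sum_univ_eq_sum_range (fun s => ∑ t ∈ Finset.range (2*N),
          (if s < t then epsc m s * bb t - epsc m t * bb s else 0)) (2*N)]
        refine Finset.sum_congr rfl fun i _ => ?_
        rw [← Fin.sum_univ_eq_sum_range (fun t =>
          (if i.val < t then epsc m i.val * bb t - epsc m t * bb i.val else 0)) (2*N)]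
    _ = Jfun m x * ∑ t ∈ Finset.range (2*m), bb t := by
        rw [keysum m bb (2*N) h2mN]
    _ = Jfun m x * ∑ i ∈ Finset.univ.filter (fun i : Fin (2*N) => i.val < 2*m), k i := by
        congr 1
        rw [Finset.sum_filter]
        have h1 : ∀ i : Fin (2*N),
            (if i.val < 2*m then bb i.val else 0) = (if i.val < 2*m then k i else 0) := by
          intro i
          by_cases hi : i.val < 2*m
          · rw [if_pos hi, if_pos hi, hbbv, hℓ0 i (by omega), zero_mul, zero_add]
          · rw [if_neg hi, if_neg hi]
        have h2 : ∀ t ∈ Finset.range (2*N), t ∉ Finset.range (2*m) →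
            (if t < 2*m then bb t else 0) = 0 := by
          intro t _ ht
          rw [if_neg (fun h => ht (Finset.mem_range.mpr h))]
        rw [Finset.sum_congr rfl (fun i (_ : i ∈ Finset.univ) => (h1 i).symm),
          Fin.sum_univ_eq_sum_range (fun t => if t < 2*m then bb t else 0) (2*N),
          ← Finset.sum_subset (Finset.range_subset_range.mpr h2mN) h2]
        exact (Finset.sum_congr rfl (fun t ht => if_pos (Finset.mem_range.mp ht))).symm
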